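/- Let A = (a, ha+d, ha+2d, …, ha+kd) where a, h, d, k are positive integers, gcd(a, d) = 1 and 1 ≤ k ≤ a−1. Then g(A) = ha·(⌊(a−2)/k⌋ + 1) + (d−1)(a−1) − 1. -/

import Mathlib

/-- `m` is representable by the sequence `A`. -/
def IsRepresentable {n : ℕ} (A : Fin n → ℕ) (m : ℕ) : Prop :=
  ∃ x : Fin n → ℕ, m = ∑ i, A i * x i

namespace Stmt17Aux

variable (a h d k : ℕ)

/-- The almost arithmetic sequence. -/
def A : Fin (k + 1) → ℕ := Fin.cons a (fun i : Fin k => h * a + d * (i.val + 1))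

lemma rep_zero : IsRepresentable (A a h d k) 0 := ⟨0, by simp⟩

lemma rep_add_gen {m : ℕ} (i : Fin (k + 1)) (hm : IsRepresentable (A a h d k) m) :
    IsRepresentable (A a h d k) (A a h d k i + m) := by
  obtain ⟨x, rfl⟩ := hm
  refine ⟨fun j => x j + Pi.single (M := fun _ => ℕ) i 1 j, ?_⟩
  have h1 : ∑ j, A a h d k j * (x j + Pi.single (M := fun _ => ℕ) i 1 j)
      = ∑ j, A a h d k j * x j + ∑ j, A a h d k j * Pi.single (M := fun _ => ℕ) i 1 j := by
    rw [← Finset.sum_add_distrib]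
    exact Finset.sum_congr rfl fun j _ => by ring
  rw [h1]
  have h2 : ∑ j, A a h d k j * Pi.single (M := fun _ => ℕ) i 1 j = A a h d k i := by
    rw [Finset.sum_eq_single i]
    · simp
    · intro j _ hj; simp [Pi.single_eq_of_ne hj]
    · simp
  omega

lemma rep_mul (x₀ : ℕ) : IsRepresentable (A a h d k) (a * x₀) := by
  induction x₀ with
  | zero => simpa using rep_zero a h d k
  | succ n ih =>
      have h1 := rep_add_gen a h d k 0 ih
      have hA0 : A a h d k 0 = a := rfl
      rw [hA0] at h1
      have h2 : a + a * n = a * (n + 1) := by ring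
      rwa [h2] at h1

lemma rep_sum (x₀ t s : ℕ) (hk : 1 ≤ k) (hts : t ≤ s) (hsk : s ≤ k * t) :
    IsRepresentable (A a h d k) (a * x₀ + h * a * t + d * s) := by
  induction t generalizing s with
  | zero =>
      have hs : s = 0 := by omega
      subst hs; simpa using rep_mul a h d k x₀
  | succ t ih =>
      have hkk : s ≤ k * t + k := by
        have : k * (t + 1) = k * t + k := by ring
        omega
      have htk : t ≤ k * t := Nat.le_mul_of_pos_left _ (by omega)
      obtain ⟨c, hc1, hck, hcst, hcs⟩ :
          ∃ c, 1 ≤ c ∧ c ≤ k ∧ t + c ≤ s ∧ s - c ≤ k * t := by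
        rcases le_or_gt k (s - t) with hle | hlt
        · exact ⟨k, by omega, le_rfl, by omega, by omega⟩
        · exact ⟨s - t, by omega, by omega, by omega, by omega⟩
      obtain ⟨s', rfl⟩ : ∃ s', s = c + s' := ⟨s - c, by omega⟩
      have hrep := rep_add_gen a h d k (⟨c - 1, by omega⟩ : Fin k).succ
        (ih s' (by omega) (by omega))
      have hc' : c - 1 + 1 = c := by omega
      have hgen : A a h d k (⟨c - 1, by omega⟩ : Fin k).succ = h * a + d * c := by
        simp only [A, Fin.cons_succ, Fin.val_mk]
        rw [hc']
      rw [hgen] at hrep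
      have heq : h * a + d * c + (a * x₀ + h * a * t + d * s')
          = a * x₀ + h * a * (t + 1) + d * (c + s') := by ring
      rwa [heq] at hrep

lemma rep_char {m : ℕ} (hm : IsRepresentable (A a h d k) m) :
    ∃ x₀ t s, m = a * x₀ + h * a * t + d * s ∧ s ≤ k * t := by
  obtain ⟨x, rfl⟩ := hm
  refine ⟨x 0, ∑ i : Fin k, x i.succ, ∑ i : Fin k, (i.val + 1) * x i.succ, ?_, ?_⟩
  · rw [Fin.sum_univ_succ]
    simp only [A, Fin.cons_zero, Fin.cons_succ]
    rw [Finset.sum_congr rfl fun (i : Fin k) _ =>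
      (by ring : (h * a + d * (i.val + 1)) * x i.succ
        = h * a * x i.succ + d * ((i.val + 1) * x i.succ)),
      Finset.sum_add_distrib, Finset.mul_sum, Finset.mul_sum]
    omega
  · rw [Finset.mul_sum]
    apply Finset.sum_le_sum
    intro i _
    exact Nat.mul_le_mul_right _ i.isLt

end Stmt17Aux

open Stmt17Aux in
/-- For the almost arithmetic sequence `A = (a, ha+d, ha+2d, …, ha+kd)` with
`a, h, d, k ≥ 1`, `gcd(a, d) = 1` and `1 ≤ k ≤ a-1`:
`g(A) = ha·(⌊(a-2)/k⌋ + 1) + (d-1)(a-1) - 1`. -/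
theorem stmt_17 (a h d k : ℕ) (ha : 0 < a) (hh : 0 < h) (hd : 0 < d)
    (had : Nat.gcd a d = 1) (hk1 : 1 ≤ k) (hka : k ≤ a - 1)
    (g : ℕ)
    (hg : IsGreatest {m : ℕ | ¬ IsRepresentable
      (Fin.cons a (fun i : Fin k => h * a + d * (i.val + 1))) m} g) :
    (g : ℤ) = h * a * ((((a - 2) / k : ℕ) : ℤ) + 1)
      + ((d : ℤ) - 1) * ((a : ℤ) - 1) - 1 := by
  have ha2 : 2 ≤ a := by omega
  have hk0 : 0 < k := hk1
  haveI : NeZero a := ⟨ha.ne'⟩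
  obtain ⟨q, hq⟩ : ∃ q : ℕ, q = (a - 2) / k := ⟨_, rfl⟩
  have haN : a ≤ h * a * (q + 1) := by
    calc a = 1 * a * 1 := by ring
    _ ≤ h * a * (q + 1) := Nat.mul_le_mul (Nat.mul_le_mul (by omega) le_rfl) (by omega)
  -- the claimed Frobenius number N
  obtain ⟨N, hNa⟩ : ∃ N : ℕ, N + a = h * a * (q + 1) + d * (a - 1) :=
    ⟨h * a * (q + 1) + d * (a - 1) - a,
      Nat.sub_add_cancel (haN.trans (Nat.le_add_right _ _))⟩
  have hdu : IsUnit (d : ZMod a) :=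
    (ZMod.isUnit_iff_coprime d a).mpr (Nat.coprime_comm.mp had)
  -- N is not representable
  have hNnr : ¬ IsRepresentable (A a h d k) N := by
    rintro hrep
    obtain ⟨x₀, t, s, hmeq, hsk⟩ := rep_char a h d k hrep
    have h1 : ((N : ℕ) : ZMod a) = (d : ZMod a) * (s : ZMod a) := by
      rw [hmeq]; push_cast [ZMod.natCast_self]; ring
    have h2 : ((N : ℕ) : ZMod a) = (d : ZMod a) * (((a - 1 : ℕ) : ZMod a)) := by
      have h3 : ((N + a : ℕ) : ZMod a)
          = ((h * a * (q + 1) + d * (a - 1) : ℕ) : ZMod a) := by rw [hNa]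
      push_cast [ZMod.natCast_self] at h3
      simpa using h3
    have hmod : (d : ZMod a) * (s : ZMod a) = (d : ZMod a) * ((a - 1 : ℕ) : ZMod a) :=
      h1.symm.trans h2
    have hs_mod : s ≡ a - 1 [MOD a] := by
      have := hdu.mul_left_cancel hmod
      rwa [ZMod.natCast_eq_natCast_iff] at this
    have hs_ge : a - 1 ≤ s := by
      have h1 : s % a = (a - 1) % a := hs_mod
      have h2 : (a - 1) % a = a - 1 := Nat.mod_eq_of_lt (by omega)
      have := Nat.mod_le s a
      omega
    have ht_ge : q + 1 ≤ t := by
      have h1 : a - 2 < k * t := by omega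
      have h2 : (a - 2) / k < t := (Nat.div_lt_iff_lt_mul hk0).mpr
        (h1.trans_le (le_of_eq (mul_comm k t)))
      omega
    have : N + a ≤ N := by
      calc N + a = h * a * (q + 1) + d * (a - 1) := hNa
      _ ≤ h * a * t + d * s :=
          Nat.add_le_add (Nat.mul_le_mul_left _ ht_ge) (Nat.mul_le_mul_left _ hs_ge)
      _ ≤ a * x₀ + h * a * t + d * s := by omega
      _ = N := hmeq.symm
    omega
  -- every m > N is representable
  have hrep_gt : ∀ m : ℕ, N < m → IsRepresentable (A a h d k) m := by
    intro m hm
    obtain ⟨r, hr⟩ : ∃ r : ℕ, r = ((d : ZMod a)⁻¹ * (m : ZMod a)).val := ⟨_, rfl⟩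
    have hr_lt : r < a := by rw [hr]; exact ZMod.val_lt _
    have hr_cast : ((r : ℕ) : ZMod a) = (d : ZMod a)⁻¹ * (m : ZMod a) := by
      rw [hr, ZMod.natCast_val, ZMod.cast_id]
    have hdr : ((d * r : ℕ) : ZMod a) = ((m : ℕ) : ZMod a) := by
      push_cast
      rw [hr_cast, ← mul_assoc, ZMod.mul_inv_of_unit _ hdu, one_mul]
    obtain ⟨t, ht⟩ : ∃ t : ℕ, t = (r + k - 1) / k := ⟨_, rfl⟩
    have htr : t ≤ r := by
      rcases Nat.eq_zero_or_pos r with hr0 | hr0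
      · have h0 : t = (0 + k - 1) / k := by rw [ht, hr0]
        have h1 : (0 + k - 1) / k = 0 := Nat.div_eq_of_lt (by omega)
        omega
      · obtain ⟨r', hr'⟩ : ∃ r', r = r' + 1 := ⟨r - 1, by omega⟩
        have h1 : r' ≤ k * r' := Nat.le_mul_of_pos_left _ hk0
        have h2 : k * (r' + 1) = k * r' + k := by ring
        have h3 : r + k - 1 ≤ k * (r' + 1) := by omega
        have h4 := Nat.div_le_div_right (c := k) h3
        rw [Nat.mul_div_cancel_left _ hk0] at h4
        omega
    have hrkt : r ≤ k * t := by
      rcases Nat.eq_zero_or_pos r with hr0 | hr0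
      · omega
      · by_contra hcon
        push_neg at hcon
        have h5 : t * k ≤ r - 1 := by
          rw [mul_comm]
          omega
        have h6 : t ≤ (r - 1) / k := (Nat.le_div_iff_mul_le hk0).mpr h5
        have h7 : t = (r - 1) / k + 1 := by
          rw [ht]
          have : r + k - 1 = (r - 1) + k := by omega
          rw [this, Nat.add_div_right _ hk0]
        omega
    have htq : t ≤ q + 1 := by
      have h1 : r + k - 1 ≤ (a - 2) + k := by omega
      have h2 := Nat.div_le_div_right (c := k) h1
      rw [Nat.add_div_right _ hk0] at h2
      omega
    have hF_le : h * a * t + d * r ≤ N + a := by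
      rw [hNa]
      exact Nat.add_le_add (Nat.mul_le_mul_left _ htq) (Nat.mul_le_mul_left _ (by omega))
    have hmodF : m ≡ h * a * t + d * r [MOD a] := by
      rw [← ZMod.natCast_eq_natCast_iff]
      have h1 : ((h * a * t + d * r : ℕ) : ZMod a) = ((d * r : ℕ) : ZMod a) := by
        push_cast [ZMod.natCast_self]; ring
      rw [h1, hdr]
    have hmF : h * a * t + d * r ≤ m := by
      by_contra hcon
      push_neg at hcon
      have hdvd : a ∣ h * a * t + d * r - m := (Nat.modEq_iff_dvd' hcon.le).mp hmodF
      have := Nat.le_of_dvd (by omega) hdvd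
      omega
    obtain ⟨x₀, hx₀⟩ := (Nat.modEq_iff_dvd' hmF).mp hmodF.symm
    have hmeq : m = a * x₀ + h * a * t + d * r := by omega
    rw [hmeq]
    exact rep_sum a h d k x₀ t r hk1 htr hrkt
  -- conclude g = N
  have hgN : g = N := by
    have h1 : N ≤ g := hg.2 hNnr
    have h2 : g ≤ N := by
      by_contra hcon
      push_neg at hcon
      exact hg.1 (hrep_gt g hcon)
    omega
  have h9 := congrArg (fun n : ℕ => (n : ℤ)) hNa
  simp only [Nat.cast_add, Nat.cast_mul, Nat.cast_sub (by omega : 1 ≤ a),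
    Nat.cast_one] at h9
  have hcast : (g : ℤ) = (h : ℤ) * a * ((q : ℤ) + 1) + (d : ℤ) * ((a : ℤ) - 1) - a := by
    rw [hgN]; linarith
  rw [hcast, hq]
  ring
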